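/- Let V₁, V₂ be finite-dimensional real normed vector spaces and K₁ ⊆ V₁, K₂ ⊆ V₂ nonempty compact convex sets. Let Λ be the linear map sending a functional ψ on A(V₁ × V₂) to the pair (ψ₁, ψ₂), where ψ₁ f = ψ (f ∘ fst-lift) for f ∈ A(V₁) (fst-lift f being the affine map (x, y) ↦ f x) and ψ₂ g = ψ (g ∘ snd-lift) for g ∈ A(V₂). Then Λ is injective, and Λ maps the cone C*(K₁ × K₂) bijectively onto {(ψ₁, ψ₂) ∈ C*(K₁) × C*(K₂) | ψ₁ 1 = ψ₂ 1}; that is, the positive dual cone of the direct product state space K₁ × K₂ is exactly the set of pairs of positive functionals with equal normalization. -/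

import Mathlib

open scoped BigOperators

/-- Evaluation of affine functions at a point, as a linear functional on `A(V) = V →ᵃ[ℝ] ℝ`. -/
def evalFun {V : Type*} [NormedAddCommGroup V] [NormedSpace ℝ V] (x : V) :
    (V →ᵃ[ℝ] ℝ) →ₗ[ℝ] ℝ where
  toFun f := f x
  map_add' f g := rfl
  map_smul' c f := rfl

/-- The positive dual cone `C*(K)`: linear functionals on `A(V)` nonnegative on every
affine function that is nonnegative on `K`. -/
def posDual {V : Type*} [NormedAddCommGroup V] [NormedSpace ℝ V] (K : Set V) :
    Set ((V →ᵃ[ℝ] ℝ) →ₗ[ℝ] ℝ) :=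
  {ψ | ∀ f : V →ᵃ[ℝ] ℝ, (∀ x ∈ K, 0 ≤ f x) → 0 ≤ ψ f}

/-- The state space `𝔖(K)` of the effect algebra of `K`: normalized elements of `C*(K)`. -/
def states {V : Type*} [NormedAddCommGroup V] [NormedSpace ℝ V] (K : Set V) :
    Set ((V →ᵃ[ℝ] ℝ) →ₗ[ℝ] ℝ) :=
  {ψ ∈ posDual K | ψ (AffineMap.const ℝ V (1 : ℝ)) = 1}

noncomputable section

/-- The lift of an affine function on `V₁` to `V₁ × V₂` via the first projection. -/
def liftFst {V₁ V₂ : Type*} [NormedAddCommGroup V₁] [NormedSpace ℝ V₁]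
    [NormedAddCommGroup V₂] [NormedSpace ℝ V₂] (f : V₁ →ᵃ[ℝ] ℝ) : (V₁ × V₂) →ᵃ[ℝ] ℝ :=
  f.comp (LinearMap.fst ℝ V₁ V₂).toAffineMap

/-- The lift of an affine function on `V₂` to `V₁ × V₂` via the second projection. -/
def liftSnd {V₁ V₂ : Type*} [NormedAddCommGroup V₁] [NormedSpace ℝ V₁]
    [NormedAddCommGroup V₂] [NormedSpace ℝ V₂] (g : V₂ →ᵃ[ℝ] ℝ) : (V₁ × V₂) →ᵃ[ℝ] ℝ :=
  g.comp (LinearMap.snd ℝ V₁ V₂).toAffineMap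

/-- First component of `Λ`: restriction of a functional on `A(V₁ × V₂)` to functions
pulled back from `V₁`. -/
def lamFst {V₁ V₂ : Type*} [NormedAddCommGroup V₁] [NormedSpace ℝ V₁]
    [NormedAddCommGroup V₂] [NormedSpace ℝ V₂]
    (ψ : ((V₁ × V₂) →ᵃ[ℝ] ℝ) →ₗ[ℝ] ℝ) : (V₁ →ᵃ[ℝ] ℝ) →ₗ[ℝ] ℝ where
  toFun f := ψ (liftFst f)
  map_add' f g := by
    show ψ (liftFst (f + g)) = ψ (liftFst f) + ψ (liftFst g)
    rw [show liftFst (f + g) = liftFst f + liftFst (V₁ := V₁) (V₂ := V₂) g from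
      AffineMap.ext fun x => rfl, map_add]
  map_smul' c f := by
    show ψ (liftFst (c • f)) = c • ψ (liftFst f)
    rw [show liftFst (c • f) = c • liftFst (V₁ := V₁) (V₂ := V₂) f from
      AffineMap.ext fun x => rfl, map_smul]

/-- Second component of `Λ`. -/
def lamSnd {V₁ V₂ : Type*} [NormedAddCommGroup V₁] [NormedSpace ℝ V₁]
    [NormedAddCommGroup V₂] [NormedSpace ℝ V₂]
    (ψ : ((V₁ × V₂) →ᵃ[ℝ] ℝ) →ₗ[ℝ] ℝ) : (V₂ →ᵃ[ℝ] ℝ) →ₗ[ℝ] ℝ where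
  toFun g := ψ (liftSnd g)
  map_add' f g := by
    show ψ (liftSnd (f + g)) = ψ (liftSnd f) + ψ (liftSnd g)
    rw [show liftSnd (f + g) = liftSnd f + liftSnd (V₁ := V₁) (V₂ := V₂) g from
      AffineMap.ext fun x => rfl, map_add]
  map_smul' c f := by
    show ψ (liftSnd (c • f)) = c • ψ (liftSnd f)
    rw [show liftSnd (c • f) = c • liftSnd (V₁ := V₁) (V₂ := V₂) f from
      AffineMap.ext fun x => rfl, map_smul]

/-- The map `Λ` sending a functional on `A(V₁ × V₂)` to its pair of restrictions. -/
def lam {V₁ V₂ : Type*} [NormedAddCommGroup V₁] [NormedSpace ℝ V₁]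
    [NormedAddCommGroup V₂] [NormedSpace ℝ V₂]
    (ψ : ((V₁ × V₂) →ᵃ[ℝ] ℝ) →ₗ[ℝ] ℝ) :
    ((V₁ →ᵃ[ℝ] ℝ) →ₗ[ℝ] ℝ) × ((V₂ →ᵃ[ℝ] ℝ) →ₗ[ℝ] ℝ) :=
  (lamFst ψ, lamSnd ψ)

section Aux

variable {V₁ V₂ : Type*} [NormedAddCommGroup V₁] [NormedSpace ℝ V₁]
    [NormedAddCommGroup V₂] [NormedSpace ℝ V₂]

/-- First component of the decomposition of an affine function on the product. -/
def decFst (h : (V₁ × V₂) →ᵃ[ℝ] ℝ) : V₁ →ᵃ[ℝ] ℝ :=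
  h.comp (LinearMap.inl ℝ V₁ V₂).toAffineMap

/-- Second component of the decomposition of an affine function on the product. -/
def decSnd (h : (V₁ × V₂) →ᵃ[ℝ] ℝ) : V₂ →ᵃ[ℝ] ℝ :=
  h.comp (LinearMap.inr ℝ V₁ V₂).toAffineMap - AffineMap.const ℝ V₂ (h 0)

lemma decFst_apply (h : (V₁ × V₂) →ᵃ[ℝ] ℝ) (x : V₁) : decFst h x = h (x, 0) := rfl

lemma decSnd_apply (h : (V₁ × V₂) →ᵃ[ℝ] ℝ) (y : V₂) : decSnd h y = h (0, y) - h 0 := rfl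

lemma dec_eval (h : (V₁ × V₂) →ᵃ[ℝ] ℝ) (x : V₁) (y : V₂) :
    h (x, y) = decFst h x + decSnd h y := by
  have e : ∀ p : V₁ × V₂, h p = h.linear p + h 0 := fun p => congrFun h.decomp p
  rw [decFst_apply, decSnd_apply, e (x, y), e (x, 0), e (0, y)]
  have : ((x, y) : V₁ × V₂) = (x, 0) + (0, y) := by simp
  rw [this, map_add]
  ring_nf

lemma dec_sum (h : (V₁ × V₂) →ᵃ[ℝ] ℝ) :
    h = liftFst (decFst h) + liftSnd (decSnd h) := by
  apply AffineMap.ext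
  rintro ⟨x, y⟩
  exact dec_eval h x y

lemma const_eq_smul (V : Type*) [NormedAddCommGroup V] [NormedSpace ℝ V] (c : ℝ) :
    AffineMap.const ℝ V c = c • AffineMap.const ℝ V (1 : ℝ) := by
  apply AffineMap.ext; intro x; simp

/-- The inverse map combining a pair of functionals into one on the product. -/
def combine (ψ₁ : (V₁ →ᵃ[ℝ] ℝ) →ₗ[ℝ] ℝ) (ψ₂ : (V₂ →ᵃ[ℝ] ℝ) →ₗ[ℝ] ℝ) :
    ((V₁ × V₂) →ᵃ[ℝ] ℝ) →ₗ[ℝ] ℝ where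
  toFun h := ψ₁ (decFst h) + ψ₂ (decSnd h)
  map_add' h h' := by
    have e1 : decFst (h + h') = decFst h + decFst h' := by
      apply AffineMap.ext; intro x; rfl
    have e2 : decSnd (h + h') = decSnd h + decSnd h' := by
      apply AffineMap.ext; intro y
      simp [decSnd_apply]; ring
    rw [e1, e2, map_add, map_add]; ring
  map_smul' c h := by
    have e1 : decFst (c • h) = c • decFst h := by
      apply AffineMap.ext; intro x; rfl
    have e2 : decSnd (c • h) = c • decSnd h := by
      apply AffineMap.ext; intro y
      simp [decSnd_apply]; ring
    rw [e1, e2, map_smul, map_smul]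
    simp; ring

end Aux

/-- `Λ` is injective and maps the positive dual cone of the direct product
state space `K₁ × K₂` bijectively onto the pairs of positive functionals with equal
normalization. -/
theorem lam_injective_and_image {V₁ V₂ : Type*}
    [NormedAddCommGroup V₁] [NormedSpace ℝ V₁] [FiniteDimensional ℝ V₁]
    [NormedAddCommGroup V₂] [NormedSpace ℝ V₂] [FiniteDimensional ℝ V₂]
    (K₁ : Set V₁) (K₂ : Set V₂) (hne₁ : K₁.Nonempty) (hne₂ : K₂.Nonempty)
    (hcomp₁ : IsCompact K₁) (hcomp₂ : IsCompact K₂)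
    (hconv₁ : Convex ℝ K₁) (hconv₂ : Convex ℝ K₂) :
    Function.Injective (lam (V₁ := V₁) (V₂ := V₂)) ∧
    lam '' posDual (K₁ ×ˢ K₂) =
      {p : ((V₁ →ᵃ[ℝ] ℝ) →ₗ[ℝ] ℝ) × ((V₂ →ᵃ[ℝ] ℝ) →ₗ[ℝ] ℝ) |
        p.1 ∈ posDual K₁ ∧ p.2 ∈ posDual K₂ ∧
        p.1 (AffineMap.const ℝ V₁ (1 : ℝ)) = p.2 (AffineMap.const ℝ V₂ (1 : ℝ))} := by
  have lamFst_apply : ∀ (ψ : ((V₁ × V₂) →ᵃ[ℝ] ℝ) →ₗ[ℝ] ℝ) (f : V₁ →ᵃ[ℝ] ℝ),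
      lamFst ψ f = ψ (liftFst f) := fun _ _ => rfl
  have lamSnd_apply : ∀ (ψ : ((V₁ × V₂) →ᵃ[ℝ] ℝ) →ₗ[ℝ] ℝ) (g : V₂ →ᵃ[ℝ] ℝ),
      lamSnd ψ g = ψ (liftSnd g) := fun _ _ => rfl
  have hinj : Function.Injective (lam (V₁ := V₁) (V₂ := V₂)) := by
    intro ψ ψ' hψ
    have h1 : lamFst ψ = lamFst ψ' := congrArg Prod.fst hψ
    have h2 : lamSnd ψ = lamSnd ψ' := congrArg Prod.snd hψ
    apply LinearMap.ext; intro h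
    rw [dec_sum h, map_add, map_add, ← lamFst_apply, ← lamFst_apply,
      ← lamSnd_apply, ← lamSnd_apply, h1, h2]
  refine ⟨hinj, ?_⟩
  ext p
  constructor
  · rintro ⟨ψ, hψ, rfl⟩
    refine ⟨?_, ?_, ?_⟩
    · intro f hf
      exact hψ (liftFst f) (by rintro ⟨x, y⟩ hxy; exact hf x hxy.1)
    · intro g hg
      exact hψ (liftSnd g) (by rintro ⟨x, y⟩ hxy; exact hg y hxy.2)
    · show ψ (liftFst (AffineMap.const ℝ V₁ 1)) = ψ (liftSnd (AffineMap.const ℝ V₂ 1))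
      congr 1
  · rintro ⟨h1, h2, hn⟩
    obtain ⟨ψ₁, ψ₂⟩ := p
    dsimp only at h1 h2 hn ⊢
    refine ⟨combine ψ₁ ψ₂, ?_, ?_⟩
    · -- positivity
      intro h hpos
      show 0 ≤ ψ₁ (decFst h) + ψ₂ (decSnd h)
      obtain ⟨y₀, hy₀K, hy₀min⟩ :=
        hcomp₂.exists_isMinOn hne₂ (decSnd h).continuous_of_finiteDimensional.continuousOn
      set m : ℝ := decSnd h y₀ with hm
      have hf : 0 ≤ ψ₁ (decFst h + AffineMap.const ℝ V₁ m) := by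
        apply h1
        intro x hx
        have := hpos (x, y₀) ⟨hx, hy₀K⟩
        rw [dec_eval h x y₀] at this
        simpa using this
      have hg : 0 ≤ ψ₂ (decSnd h - AffineMap.const ℝ V₂ m) := by
        apply h2
        intro y hy
        have := hy₀min hy
        simp only [AffineMap.coe_sub, Pi.sub_apply, AffineMap.const_apply, sub_nonneg]
        exact this
      have e1 : ψ₁ (decFst h + AffineMap.const ℝ V₁ m)
          = ψ₁ (decFst h) + m * ψ₁ (AffineMap.const ℝ V₁ 1) := by
        rw [map_add, const_eq_smul V₁ m, map_smul]; rfl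
      have e2 : ψ₂ (decSnd h - AffineMap.const ℝ V₂ m)
          = ψ₂ (decSnd h) - m * ψ₂ (AffineMap.const ℝ V₂ 1) := by
        rw [map_sub, const_eq_smul V₂ m, map_smul]; rfl
      rw [e1] at hf
      rw [e2] at hg
      rw [hn] at hf
      linarith
    · -- lam (combine ψ₁ ψ₂) = (ψ₁, ψ₂)
      have c1 : lamFst (combine ψ₁ ψ₂) = ψ₁ := by
        apply LinearMap.ext; intro f
        show ψ₁ (decFst (liftFst f)) + ψ₂ (decSnd (liftFst f)) = ψ₁ f
        have e1 : decFst (liftFst (V₂ := V₂) f) = f := by apply AffineMap.ext; intro x; rfl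
        have e2 : decSnd (liftFst (V₂ := V₂) f) = 0 := by
          apply AffineMap.ext; intro y
          simp [decSnd_apply, liftFst]
        rw [e1, e2, map_zero, add_zero]
      have c2 : lamSnd (combine ψ₁ ψ₂) = ψ₂ := by
        apply LinearMap.ext; intro g
        show ψ₁ (decFst (liftSnd g)) + ψ₂ (decSnd (liftSnd g)) = ψ₂ g
        have e1 : decFst (liftSnd (V₁ := V₁) g) = AffineMap.const ℝ V₁ (g 0) := by
          apply AffineMap.ext; intro x; rfl
        have e2 : decSnd (liftSnd (V₁ := V₁) g) = g - AffineMap.const ℝ V₂ (g 0) := by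
          apply AffineMap.ext; intro y
          simp [decSnd_apply, liftSnd]
        rw [e1, e2, map_sub, const_eq_smul V₁ (g 0), const_eq_smul V₂ (g 0),
          map_smul, map_smul, smul_eq_mul, smul_eq_mul, hn]
        ring
      show (lamFst (combine ψ₁ ψ₂), lamSnd (combine ψ₁ ψ₂)) = (ψ₁, ψ₂)
      rw [c1, c2]

end
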